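/- arXiv:2103.05182 — 2 statements merged into one kernel-verified Lean document; each statement's English description precedes it below -/
import Mathlib

section
/- Let x = (x₁,…,x_n) be an n-tuple of nonnegative reals with x₁ ≥ x₂ ≥ … ≥ x_n ≥ 0, and let 1 ≤ k ≤ n be an integer. Then sym_k(x) ≤ (C(n,k)^{−1/k} / B(k/n)) · hsm_{k/n}(x). Moreover, equality holds if and only if x_{k+1} = 0 or k = n. -/
open MeasureTheory Filter Topology
open scoped ENNReal

noncomputable def elogr (t : ℝ) : EReal := if t ≤ 0 then ⊥ else ((Real.log t : ℝ) : EReal)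

/-- The Halász–Székely kernel, with values in `[-∞, +∞)` (`EReal`). -/
noncomputable def hsKernel (c x y : ℝ) : EReal :=
  if c = 0 then ((Real.log y + y⁻¹ * x - 1 : ℝ) : EReal)
  else ((Real.log y : ℝ) : EReal) + ((c⁻¹ : ℝ) : EReal) * elogr (c * y⁻¹ * x + 1 - c)

/-- The nonnegative part of an extended real, as an element of `[0,∞]`. -/
noncomputable def erealToENNReal (x : EReal) : ℝ≥0∞ :=
  if x = ⊤ then ⊤ else ENNReal.ofReal x.toReal

/-- Integral of an `EReal`-valued function: positive part minus negative part. -/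
noncomputable def eIntegral (μ : Measure ℝ) (f : ℝ → EReal) : EReal :=
  ((∫⁻ x, erealToENNReal (f x) ∂μ : ℝ≥0∞) : EReal) - ((∫⁻ x, erealToENNReal (-f x) ∂μ : ℝ≥0∞) : EReal)

/-- Exponential on `EReal`, with values in `[0,∞]`. -/
noncomputable def eexp (x : EReal) : ℝ≥0∞ :=
  if x = ⊤ then ⊤ else if x = ⊥ then 0 else ENNReal.ofReal (Real.exp x.toReal)

/-- The Halász–Székely barycenter `[μ]_c ∈ [0,∞]`. -/
noncomputable def hsBary (c : ℝ) (μ : Measure ℝ) : ℝ≥0∞ :=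
  eexp (⨅ y : {y : ℝ // 0 < y}, eIntegral μ (fun x => hsKernel c x y))

/-- The function `B`. -/
noncomputable def hsB (c : ℝ) : ℝ :=
  if c = 0 then 0 else if c = 1 then 1 else c * (1 - c) ^ ((1 - c) / c)

/-- The uniform probability measure on the entries of a tuple. -/
noncomputable def unifMeasure {n : ℕ} (x : Fin n → ℝ) : Measure ℝ :=
  (n : ℝ≥0∞)⁻¹ • ∑ i, MeasureTheory.Measure.dirac (x i)

/-- The Halász–Székely mean of a tuple. -/
noncomputable def hsMean (c : ℝ) {n : ℕ} (x : Fin n → ℝ) : ℝ≥0∞ := hsBary c (unifMeasure x)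

/-- The `k`-th symmetric mean of an `n`-tuple. -/
noncomputable def symMean {n : ℕ} (k : ℕ) (x : Fin n → ℝ) : ℝ :=
  ((∑ s ∈ Finset.univ.powersetCard k, ∏ i ∈ s, x i) / (n.choose k)) ^ ((k : ℝ)⁻¹)


-- L1
lemma lintegral_unif {n : ℕ} (x : Fin n → ℝ) (f : ℝ → ℝ≥0∞) :
    ∫⁻ t, f t ∂(unifMeasure x) = (n : ℝ≥0∞)⁻¹ * ∑ i, f (x i) := by
  rw [unifMeasure, lintegral_smul_measure, lintegral_finset_sum_measure]
  simp [lintegral_dirac]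

lemma erealToENNReal_coe (g : ℝ) : erealToENNReal ((g : ℝ) : EReal) = ENNReal.ofReal g := by
  simp [erealToENNReal]

lemma erealToENNReal_ne_top {x : EReal} (h : x ≠ ⊤) : erealToENNReal x ≠ ⊤ := by
  simp [erealToENNReal, h]

-- L2
lemma eIntegral_unif {n : ℕ} (hn : 0 < n) (x : Fin n → ℝ) (f : ℝ → EReal) (g : Fin n → ℝ)
    (hfg : ∀ i, f (x i) = ((g i : ℝ) : EReal)) :
    eIntegral (unifMeasure x) f = (((∑ i, g i) / n : ℝ) : EReal) := by
  have hpos : ∫⁻ t, erealToENNReal (f t) ∂(unifMeasure x)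
      = ENNReal.ofReal ((∑ i, max (g i) 0) / n) := by
    rw [lintegral_unif]
    have : ∀ i : Fin n, erealToENNReal (f (x i)) = ENNReal.ofReal (max (g i) 0) := by
      intro i
      rw [hfg i, erealToENNReal_coe]
      rcases le_total 0 (g i) with h | h
      · rw [max_eq_left h]
      · rw [max_eq_right h, ENNReal.ofReal_of_nonpos h, ENNReal.ofReal_zero]
    simp_rw [this]
    rw [← ENNReal.ofReal_sum_of_nonneg (fun i _ => le_max_right _ _),
      div_eq_inv_mul, ENNReal.ofReal_mul (by positivity),
      ENNReal.ofReal_inv_of_pos (by exact_mod_cast hn), ENNReal.ofReal_natCast]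
  have hneg : ∫⁻ t, erealToENNReal (-f t) ∂(unifMeasure x)
      = ENNReal.ofReal ((∑ i, max (-g i) 0) / n) := by
    rw [lintegral_unif]
    have : ∀ i : Fin n, erealToENNReal (-f (x i)) = ENNReal.ofReal (max (-g i) 0) := by
      intro i
      rw [hfg i, ← EReal.coe_neg, erealToENNReal_coe]
      rcases le_total 0 (-g i) with h | h
      · rw [max_eq_left h]
      · rw [max_eq_right h, ENNReal.ofReal_of_nonpos h, ENNReal.ofReal_zero]
    simp_rw [this]
    rw [← ENNReal.ofReal_sum_of_nonneg (fun i _ => le_max_right _ _),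
      div_eq_inv_mul, ENNReal.ofReal_mul (by positivity),
      ENNReal.ofReal_inv_of_pos (by exact_mod_cast hn), ENNReal.ofReal_natCast]
  rw [eIntegral, hpos, hneg, EReal.coe_ennreal_ofReal, EReal.coe_ennreal_ofReal]
  rw [max_eq_left (by positivity), max_eq_left (by positivity), ← EReal.coe_sub]
  congr 1
  rw [div_sub_div_same]
  congr 1
  rw [← Finset.sum_sub_distrib]
  exact Finset.sum_congr rfl fun i _ => by rcases le_total 0 (g i) with h | h <;>
    [rw [max_eq_left h, max_eq_right (neg_nonpos.mpr h)];
     rw [max_eq_right h, max_eq_left (neg_nonneg.mpr h)] ] <;> ring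

-- L3
lemma eIntegral_unif_bot {n : ℕ} (hn : 0 < n) (x : Fin n → ℝ) (f : ℝ → EReal)
    (hbot : ∃ i, f (x i) = ⊥) :
    eIntegral (unifMeasure x) f = ⊥ := by
  have hneg : ∫⁻ t, erealToENNReal (-f t) ∂(unifMeasure x) = ⊤ := by
    rw [lintegral_unif]
    obtain ⟨i, hi⟩ := hbot
    have : ∑ j, erealToENNReal (-f (x j)) = ⊤ := by
      rw [ENNReal.sum_eq_top]
      exact ⟨i, Finset.mem_univ i, by simp [hi, erealToENNReal]⟩
    rw [this, ENNReal.mul_top]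
    simp [hn.ne']
  rw [eIntegral, hneg, EReal.coe_ennreal_top, EReal.sub_top]

lemma eexp_coe (t : ℝ) : eexp ((t : ℝ) : EReal) = ENNReal.ofReal (Real.exp t) := by
  simp [eexp]

lemma eexp_mono : Monotone eexp := by
  intro a b hab
  induction a using EReal.rec with
  | bot => simp [eexp]
  | top => rw [top_le_iff.mp hab]
  | coe s =>
    induction b using EReal.rec with
    | bot => exact absurd hab (by simp)
    | top => exact le_top
    | coe t =>
      rw [eexp_coe, eexp_coe]
      exact ENNReal.ofReal_le_ofReal (Real.exp_le_exp.mpr (EReal.coe_le_coe_iff.mp hab))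

lemma hsKernel_real {c t y : ℝ} (hc : c ≠ 0) (harg : 0 < c * y⁻¹ * t + 1 - c) :
    hsKernel c t y = ((Real.log y + c⁻¹ * Real.log (c * y⁻¹ * t + 1 - c) : ℝ) : EReal) := by
  rw [hsKernel, if_neg hc, elogr, if_neg (not_le.mpr harg)]
  rw [← EReal.coe_mul, ← EReal.coe_add]

lemma hsKernel_bot {c t y : ℝ} (hc : 0 < c) (harg : c * y⁻¹ * t + 1 - c ≤ 0) :
    hsKernel c t y = ⊥ := by
  rw [hsKernel, if_neg hc.ne', elogr, if_pos harg, EReal.mul_bot_of_pos, EReal.add_bot]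
  exact_mod_cast inv_pos.mpr hc
lemma eval_lt {n k : ℕ} (hk1 : 1 ≤ k) (hkn : k < n) (x : Fin n → ℝ) (hx0 : ∀ i, 0 ≤ x i)
    {y : ℝ} (hy : 0 < y) :
    eIntegral (unifMeasure x) (fun t => hsKernel ((k:ℝ)/n) t y)
      = ((Real.log (hsB ((k:ℝ)/n)) + (k:ℝ)⁻¹ *
          (Real.log (∏ i, (x i + ((n:ℝ)-k)*y/k)) - ((n:ℝ)-k) * Real.log (((n:ℝ)-k)*y/k)) : ℝ)
          : EReal) := by
  have hK : (0:ℝ) < k := by exact_mod_cast hk1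
  have hN : (0:ℝ) < n := by exact_mod_cast hk1.trans hkn.le
  have hKN : (k:ℝ) < n := by exact_mod_cast hkn
  have hc : (0:ℝ) < (k:ℝ)/n := div_pos hK hN
  have hc1 : (k:ℝ)/n < 1 := (div_lt_one hN).mpr hKN
  have hnk : (0:ℝ) < (n:ℝ)-k := by linarith
  have hr : 0 < ((n:ℝ)-k)*y/k := div_pos (mul_pos hnk hy) hK
  have hxr : ∀ i, 0 < x i + ((n:ℝ)-k)*y/k := fun i => by have := hx0 i; linarith
  have harg : ∀ i : Fin n, 0 < ((k:ℝ)/n)*y⁻¹*(x i) + 1 - (k:ℝ)/n := by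
    intro i
    have h1 : 0 ≤ ((k:ℝ)/n)*y⁻¹*(x i) :=
      mul_nonneg (mul_nonneg hc.le (inv_nonneg.mpr hy.le)) (hx0 i)
    linarith
  rw [eIntegral_unif (by omega : 0 < n) x _
    (fun i => Real.log y + ((k:ℝ)/n)⁻¹ * Real.log (((k:ℝ)/n)*y⁻¹*(x i) + 1 - (k:ℝ)/n))
    (fun i => hsKernel_real hc.ne' (harg i))]
  rw [EReal.coe_eq_coe_iff]
  have hP : (0:ℝ) < ∏ i, (x i + ((n:ℝ)-k)*y/k) := Finset.prod_pos fun i _ => hxr i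
  have hargeq : ∀ i : Fin n, ((k:ℝ)/n)*y⁻¹*(x i) + 1 - (k:ℝ)/n
      = (((k:ℝ)/n)/y) * (x i + ((n:ℝ)-k)*y/k) := by
    intro i; field_simp; ring
  have hlogarg : ∀ i : Fin n, Real.log (((k:ℝ)/n)*y⁻¹*(x i) + 1 - (k:ℝ)/n)
      = (Real.log ((k:ℝ)/n) - Real.log y) + Real.log (x i + ((n:ℝ)-k)*y/k) := by
    intro i
    rw [hargeq i, Real.log_mul (div_pos hc hy).ne' (hxr i).ne', Real.log_div hc.ne' hy.ne']
  have hsum : ∑ i : Fin n, (Real.log y + ((k:ℝ)/n)⁻¹ * Real.log (((k:ℝ)/n)*y⁻¹*(x i) + 1 - (k:ℝ)/n))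
      = (n:ℝ) * Real.log y + ((k:ℝ)/n)⁻¹ *
          ((n:ℝ) * (Real.log ((k:ℝ)/n) - Real.log y) + Real.log (∏ i, (x i + ((n:ℝ)-k)*y/k))) := by
    simp_rw [hlogarg]
    rw [Finset.sum_add_distrib, Finset.sum_const, Finset.card_univ, Fintype.card_fin,
      ← Finset.mul_sum, Finset.sum_add_distrib, Finset.sum_const, Finset.card_univ,
      Fintype.card_fin, Real.log_prod (fun i _ => (hxr i).ne')]
    push_cast
    ring
  rw [hsum]
  have hlogc : Real.log ((k:ℝ)/n) = Real.log k - Real.log n := Real.log_div hK.ne' hN.ne'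
  have hlogB : Real.log (hsB ((k:ℝ)/n))
      = (Real.log k - Real.log n) + (((n:ℝ)-k)/k) * (Real.log ((n:ℝ)-k) - Real.log n) := by
    rw [hsB, if_neg hc.ne', if_neg hc1.ne]
    have h1c : (0:ℝ) < 1 - (k:ℝ)/n := by linarith
    rw [Real.log_mul hc.ne' (Real.rpow_pos_of_pos h1c _).ne', Real.log_rpow h1c]
    have e1 : 1 - (k:ℝ)/n = ((n:ℝ)-k)/n := by field_simp
    have e2 : (1 - (k:ℝ)/n)/((k:ℝ)/n) = ((n:ℝ)-k)/k := by
      rw [e1]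
      field_simp
    rw [e2, e1, Real.log_div (by linarith : ((n:ℝ)-k) ≠ 0) hN.ne', hlogc]
  have hlogr : Real.log (((n:ℝ)-k)*y/k)
      = (Real.log ((n:ℝ)-k) - Real.log k) + Real.log y := by
    rw [Real.log_div (by positivity : ((n:ℝ)-k)*y ≠ 0) hK.ne',
      Real.log_mul (by linarith : ((n:ℝ)-k) ≠ 0) hy.ne']
    ring
  rw [hlogB, hlogr, hlogc]
  field_simp
  ring
set_option maxHeartbeats 1000000 in
lemma hsMean_one {n : ℕ} (hn : 0 < n) (x : Fin n → ℝ) (hx0 : ∀ i, 0 ≤ x i) :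
    hsMean 1 x = ENNReal.ofReal ((∏ i, x i) ^ ((n:ℝ)⁻¹)) := by
  by_cases hex : ∃ i, x i = 0
  · obtain ⟨i, hi⟩ := hex
    have hIbot : ∀ y : {y : ℝ // 0 < y},
        eIntegral (unifMeasure x) (fun t => hsKernel 1 t y) = ⊥ := by
      intro y
      refine eIntegral_unif_bot hn x _ ⟨i, ?_⟩
      have h0 : (1:ℝ) * (y:ℝ)⁻¹ * x i + 1 - 1 = 0 := by rw [hi]; ring
      exact hsKernel_bot one_pos h0.le
    haveI : Nonempty {y : ℝ // 0 < y} := ⟨⟨1, one_pos⟩⟩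
    have hinf : (⨅ y : {y : ℝ // 0 < y},
        eIntegral (unifMeasure x) (fun t => hsKernel 1 t y)) = ⊥ := by
      simp only [hIbot]
      exact iInf_const
    have hprod : ∏ i, x i = 0 := Finset.prod_eq_zero (Finset.mem_univ i) hi
    rw [hsMean, hsBary, hinf, hprod, Real.zero_rpow (by positivity : ((n:ℝ)⁻¹) ≠ 0)]
    simp [eexp]
  · push_neg at hex
    have hxpos : ∀ i, 0 < x i := fun i => (hx0 i).lt_of_ne (fun h => hex i h.symm)
    have heval : ∀ y : {y : ℝ // 0 < y},
        eIntegral (unifMeasure x) (fun t => hsKernel 1 t y)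
          = (((∑ i, Real.log (x i)) / n : ℝ) : EReal) := by
      intro y
      refine eIntegral_unif hn x _ (fun i => Real.log (x i)) fun i => ?_
      have harg : (0:ℝ) < 1 * (y:ℝ)⁻¹ * x i + 1 - 1 := by
        have h1 : (1:ℝ) * (y:ℝ)⁻¹ * x i + 1 - 1 = x i / y := by field_simp; ring
        rw [h1]; exact div_pos (hxpos i) y.2
      rw [hsKernel_real one_ne_zero harg, EReal.coe_eq_coe_iff]
      have h1 : (1:ℝ) * (y:ℝ)⁻¹ * x i + 1 - 1 = x i / y := by field_simp; ring
      rw [h1, Real.log_div (hxpos i).ne' (ne_of_gt y.2)]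
      simp
    haveI : Nonempty {y : ℝ // 0 < y} := ⟨⟨1, one_pos⟩⟩
    have hinf : (⨅ y : {y : ℝ // 0 < y},
        eIntegral (unifMeasure x) (fun t => hsKernel 1 t y))
          = (((∑ i, Real.log (x i)) / n : ℝ) : EReal) := by
      simp only [heval]
      exact iInf_const
    rw [hsMean, hsBary, hinf, eexp_coe]
    congr 1
    rw [Real.rpow_def_of_pos (Finset.prod_pos fun i _ => hxpos i),
      Real.log_prod (fun i _ => (hxpos i).ne')]
    congr 1

lemma case_eq {n : ℕ} (hn : 1 ≤ n) (x : Fin n → ℝ) (hx0 : ∀ i, 0 ≤ x i) :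
    ENNReal.ofReal (symMean n x)
      = ENNReal.ofReal ((n.choose n : ℝ) ^ (-(n : ℝ)⁻¹) / hsB ((n : ℝ) / n))
          * hsMean ((n : ℝ) / n) x := by
  have hN : ((n:ℝ)) ≠ 0 := by positivity
  have hdiv : ((n:ℝ)) / n = 1 := div_self hN
  have hB : hsB 1 = 1 := by rw [hsB, if_neg one_ne_zero, if_pos rfl]
  have hchoose : (n.choose n : ℝ) = 1 := by rw [Nat.choose_self]; norm_num
  have hsym : symMean n x = (∏ i, x i) ^ ((n:ℝ)⁻¹) := by
    rw [symMean, hchoose]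
    have : (Finset.univ : Finset (Fin n)).powersetCard n = {Finset.univ} := by
      have h := Finset.powersetCard_self (Finset.univ : Finset (Fin n))
      rwa [Finset.card_univ, Fintype.card_fin] at h
    rw [this, Finset.sum_singleton, div_one]
  rw [hsym, hdiv, hB, hchoose, Real.one_rpow, hsMean_one hn x hx0]
  norm_num

section Comb
open Finset
variable {n k : ℕ} (x : Fin n → ℝ)
lemma prod_add_expand (r : ℝ) :
    ∏ i, (x i + r) = ∑ s ∈ (univ : Finset (Fin n)).powerset, (∏ i ∈ s, x i) * r ^ (n - s.card) := by
  rw [Finset.prod_add]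
  refine Finset.sum_congr rfl fun s hs => ?_
  rw [Finset.prod_const, Finset.card_sdiff_of_subset (Finset.mem_powerset.mp hs), Finset.card_univ,
    Fintype.card_fin]

lemma sum_powersetCard_eq (k : ℕ) (r : ℝ) :
    ∑ s ∈ (univ : Finset (Fin n)).powersetCard k, (∏ i ∈ s, x i) * r ^ (n - s.card)
      = (∑ s ∈ (univ : Finset (Fin n)).powersetCard k, ∏ i ∈ s, x i) * r ^ (n - k) := by
  rw [Finset.sum_mul]
  refine Finset.sum_congr rfl fun s hs => ?_
  rw [(Finset.mem_powersetCard.mp hs).2]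

lemma subset_sum_le_prod (hx0 : ∀ i, 0 ≤ x i) {r : ℝ} (hr : 0 ≤ r)
    (S : Finset (Finset (Fin n))) (hS : S ⊆ (univ : Finset (Fin n)).powerset) :
    ∑ s ∈ S, (∏ i ∈ s, x i) * r ^ (n - s.card) ≤ ∏ i, (x i + r) := by
  rw [prod_add_expand]
  refine Finset.sum_le_sum_of_subset_of_nonneg hS fun s _ _ => ?_
  exact mul_nonneg (Finset.prod_nonneg fun i _ => hx0 i) (pow_nonneg hr _)

lemma Ek_le_prod (hx0 : ∀ i, 0 ≤ x i) {r : ℝ} (hr : 0 ≤ r) (k : ℕ) :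
    (∑ s ∈ (univ : Finset (Fin n)).powersetCard k, ∏ i ∈ s, x i) * r ^ (n - k)
      ≤ ∏ i, (x i + r) := by
  rw [← sum_powersetCard_eq]
  exact subset_sum_le_prod x hx0 hr _ (fun s hs => Finset.mem_powerset.mpr
    (Finset.mem_powersetCard.mp hs).1)

lemma Ek_Ek1_le_prod (hx0 : ∀ i, 0 ≤ x i) {r : ℝ} (hr : 0 ≤ r) (k : ℕ) :
    (∑ s ∈ (univ : Finset (Fin n)).powersetCard k, ∏ i ∈ s, x i) * r ^ (n - k)
      + (∑ s ∈ (univ : Finset (Fin n)).powersetCard (k+1), ∏ i ∈ s, x i) * r ^ (n - (k+1))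
      ≤ ∏ i, (x i + r) := by
  rw [← sum_powersetCard_eq, ← sum_powersetCard_eq]
  have hdisj : Disjoint ((univ : Finset (Fin n)).powersetCard k)
      ((univ : Finset (Fin n)).powersetCard (k+1)) := by
    rw [Finset.disjoint_left]
    intro s hs hs'
    have h1 := (Finset.mem_powersetCard.mp hs).2
    have h2 := (Finset.mem_powersetCard.mp hs').2
    omega
  rw [← Finset.sum_union hdisj]
  refine subset_sum_le_prod x hx0 hr _ fun s hs => Finset.mem_powerset.mpr ?_
  rcases Finset.mem_union.mp hs with h | h
  · exact (Finset.mem_powersetCard.mp h).1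
  · exact (Finset.mem_powersetCard.mp h).1

lemma Ek_rn_le_prod (hx0 : ∀ i, 0 ≤ x i) {r : ℝ} (hr : 0 ≤ r) {k : ℕ} (hk : 1 ≤ k) :
    (∑ s ∈ (univ : Finset (Fin n)).powersetCard k, ∏ i ∈ s, x i) * r ^ (n - k) + r ^ n
      ≤ ∏ i, (x i + r) := by
  rw [← sum_powersetCard_eq]
  have hne : (∅ : Finset (Fin n)) ∉ (univ : Finset (Fin n)).powersetCard k := by
    intro h
    have := (Finset.mem_powersetCard.mp h).2
    simp at this; omega
  have : ∑ s ∈ insert (∅ : Finset (Fin n)) ((univ : Finset (Fin n)).powersetCard k),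
      (∏ i ∈ s, x i) * r ^ (n - s.card)
      = ∑ s ∈ (univ : Finset (Fin n)).powersetCard k, (∏ i ∈ s, x i) * r ^ (n - s.card)
        + r ^ n := by
    rw [Finset.sum_insert hne]
    simp [add_comm]
  rw [← this]
  refine subset_sum_le_prod x hx0 hr _ fun s hs => Finset.mem_powerset.mpr ?_
  rcases Finset.mem_insert.mp hs with h | h
  · simp [h]
  · exact (Finset.mem_powersetCard.mp h).1

noncomputable def hfun (k : ℕ) (x : Fin n → ℝ) (r : ℝ) : ℝ :=
  ∑ s ∈ ((univ : Finset (Fin n)).powerset.filter (fun s => s.card ≤ k)),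
    (∏ i ∈ s, x i) * r ^ (k - s.card)

lemma prod_vanish (hx0 : ∀ i, 0 ≤ x i) (hmono : ∀ i j : Fin n, i ≤ j → x j ≤ x i)
    (hkn : k < n) (hz : x ⟨k, hkn⟩ = 0) {s : Finset (Fin n)} (hs : k < s.card) :
    ∏ i ∈ s, x i = 0 := by
  -- s has more than k elements, so some element has val ≥ k
  have : ∃ i ∈ s, k ≤ i.val := by
    by_contra h
    push_neg at h
    have : s ⊆ (univ : Finset (Fin n)).filter (fun i => i.val < k) :=
      fun i hi => Finset.mem_filter.mpr ⟨Finset.mem_univ i, h i hi⟩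
    have hcard := Finset.card_le_card this
    have : ((univ : Finset (Fin n)).filter (fun i => i.val < k)).card ≤ k := by
      have := Finset.card_le_card (Finset.filter_subset (fun i : Fin n => i.val < k) univ)
      -- better: map into Fin k
      classical
      have hinj : Set.InjOn (fun i : Fin n => (i.val : ℕ))
          ((univ : Finset (Fin n)).filter (fun i => i.val < k)) := by
        intro a _ b _ hab
        exact Fin.val_injective hab
      calc ((univ : Finset (Fin n)).filter (fun i => i.val < k)).card
          = (((univ : Finset (Fin n)).filter (fun i => i.val < k)).image
              (fun i : Fin n => i.val)).card := (Finset.card_image_of_injOn hinj).symm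
        _ ≤ (Finset.range k).card := by
            refine Finset.card_le_card fun m hm => ?_
            obtain ⟨i, hi, rfl⟩ := Finset.mem_image.mp hm
            exact Finset.mem_range.mpr (Finset.mem_filter.mp hi).2
        _ = k := Finset.card_range k
    omega
  obtain ⟨i, hi, hki⟩ := this
  have hxi : x i = 0 := le_antisymm (hz ▸ hmono ⟨k, hkn⟩ i hki) (hx0 i)
  exact Finset.prod_eq_zero hi hxi

lemma prod_eq_hfun (hx0 : ∀ i, 0 ≤ x i) (hmono : ∀ i j : Fin n, i ≤ j → x j ≤ x i)
    (hkn : k < n) (hz : x ⟨k, hkn⟩ = 0) (r : ℝ) :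
    ∏ i, (x i + r) = r ^ (n - k) * hfun k x r := by
  have hexp : ∏ i, (x i + r)
      = ∑ s ∈ (univ : Finset (Fin n)).powerset, (∏ i ∈ s, x i) * r ^ (n - s.card) := by
    rw [Finset.prod_add]
    refine Finset.sum_congr rfl fun s hs => ?_
    rw [Finset.prod_const, Finset.card_sdiff_of_subset (Finset.mem_powerset.mp hs), Finset.card_univ,
      Fintype.card_fin]
  rw [hexp, hfun, Finset.mul_sum]
  rw [← Finset.sum_filter_add_sum_filter_not ((univ : Finset (Fin n)).powerset)
    (fun s => s.card ≤ k)]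
  have h2 : ∑ s ∈ ((univ : Finset (Fin n)).powerset.filter (fun s => ¬ s.card ≤ k)),
      (∏ i ∈ s, x i) * r ^ (n - s.card) = 0 := by
    refine Finset.sum_eq_zero fun s hs => ?_
    rw [prod_vanish x hx0 hmono hkn hz (not_le.mp (Finset.mem_filter.mp hs).2), zero_mul]
  rw [h2, add_zero]
  refine Finset.sum_congr rfl fun s hs => ?_
  have hsk : s.card ≤ k := (Finset.mem_filter.mp hs).2
  have hcn : s.card ≤ n := by
    have := Finset.card_le_card (Finset.mem_powerset.mp (Finset.mem_filter.mp hs).1)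
    simpa using this
  have : n - s.card = (n - k) + (k - s.card) := by omega
  rw [this, pow_add]; ring

lemma hfun_continuous : Continuous (hfun k x) := by
  refine continuous_finset_sum _ fun s _ => ?_
  exact continuous_const.mul (continuous_pow _)

lemma hfun_zero (hk : 1 ≤ k) :
    hfun k x 0 = ∑ s ∈ (univ : Finset (Fin n)).powersetCard k, ∏ i ∈ s, x i := by
  rw [hfun]
  rw [← Finset.sum_subset (s₁ := (univ : Finset (Fin n)).powersetCard k)]
  · refine Finset.sum_congr rfl fun s hs => ?_
    rw [(Finset.mem_powersetCard.mp hs).2]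
    simp
  · intro s hs
    rw [Finset.mem_powersetCard] at hs
    exact Finset.mem_filter.mpr ⟨Finset.mem_powerset.mpr hs.1, hs.2.le⟩
  · intro s hs hns
    have h1 : s.card ≤ k := (Finset.mem_filter.mp hs).2
    have h2 : s.card ≠ k := by
      intro h
      exact hns (Finset.mem_powersetCard.mpr ⟨Finset.mem_powerset.mp (Finset.mem_filter.mp hs).1, h⟩)
    have : 0 < k - s.card := by omega
    rw [zero_pow (by omega), mul_zero]
lemma hfun_nonneg (hx0 : ∀ i, 0 ≤ x i) {r : ℝ} (hr : 0 ≤ r) : 0 ≤ hfun k x r := by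
  refine Finset.sum_nonneg fun s _ => mul_nonneg (Finset.prod_nonneg fun i _ => hx0 i)
    (pow_nonneg hr _)
end Comb

lemma lower_bound {n k : ℕ} (hk1 : 1 ≤ k) (hlt : k < n) (x : Fin n → ℝ) (hx0 : ∀ i, 0 ≤ x i)
    (E' : ℝ) (hE' : 0 < E') (hbound : ∀ r : ℝ, 0 < r → E' * r ^ (n - k) ≤ ∏ i, (x i + r)) :
    ENNReal.ofReal (hsB ((k:ℝ)/n) * E' ^ ((k:ℝ)⁻¹)) ≤ hsMean ((k:ℝ)/n) x := by
  have hK : (0:ℝ) < k := by exact_mod_cast hk1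
  have hN : (0:ℝ) < n := by exact_mod_cast hk1.trans hlt.le
  have hKN : (k:ℝ) < n := by exact_mod_cast hlt
  have hc : (0:ℝ) < (k:ℝ)/n := div_pos hK hN
  have hc1 : (k:ℝ)/n < 1 := (div_lt_one hN).mpr hKN
  have h1c : (0:ℝ) < 1 - (k:ℝ)/n := by linarith
  have hB : 0 < hsB ((k:ℝ)/n) := by
    rw [hsB, if_neg hc.ne', if_neg hc1.ne]
    exact mul_pos hc (Real.rpow_pos_of_pos h1c _)
  have hLb : ∀ y : {y : ℝ // 0 < y},
      ((Real.log (hsB ((k:ℝ)/n)) + (k:ℝ)⁻¹ * Real.log E' : ℝ) : EReal)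
        ≤ eIntegral (unifMeasure x) (fun t => hsKernel ((k:ℝ)/n) t y) := by
    intro y
    rw [eval_lt hk1 hlt x hx0 y.2, EReal.coe_le_coe_iff]
    set r := ((n:ℝ)-k)*(y:ℝ)/k with hrdef
    have hr : 0 < r := div_pos (mul_pos (by linarith) y.2) hK
    have hxr : ∀ i, 0 < x i + r := fun i => by have := hx0 i; linarith
    have hPp : (0:ℝ) < ∏ i, (x i + r) := Finset.prod_pos fun i _ => hxr i
    have hlog : Real.log E' + ((n:ℝ)-k) * Real.log r ≤ Real.log (∏ i, (x i + r)) := by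
      have h1 := Real.log_le_log (by positivity) (hbound r hr)
      rw [Real.log_mul hE'.ne' (pow_pos hr _).ne', Real.log_pow] at h1
      have hcast : ((n - k : ℕ) : ℝ) = (n:ℝ) - k := by
        rw [Nat.cast_sub hlt.le]
      rwa [hcast] at h1
    have h2 : (k:ℝ)⁻¹ * Real.log E'
        ≤ (k:ℝ)⁻¹ * (Real.log (∏ i, (x i + r)) - ((n:ℝ)-k) * Real.log r) :=
      mul_le_mul_of_nonneg_left (by linarith) (by positivity)
    linarith
  have : ((Real.log (hsB ((k:ℝ)/n)) + (k:ℝ)⁻¹ * Real.log E' : ℝ) : EReal)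
      ≤ ⨅ y : {y : ℝ // 0 < y}, eIntegral (unifMeasure x) (fun t => hsKernel ((k:ℝ)/n) t y) :=
    le_iInf hLb
  calc ENNReal.ofReal (hsB ((k:ℝ)/n) * E' ^ ((k:ℝ)⁻¹))
      = eexp ((Real.log (hsB ((k:ℝ)/n)) + (k:ℝ)⁻¹ * Real.log E' : ℝ) : EReal) := by
        rw [eexp_coe, Real.exp_add, Real.exp_log hB, Real.rpow_def_of_pos hE', mul_comm (Real.log E')]
    _ ≤ hsMean ((k:ℝ)/n) x := eexp_mono this

lemma upper_bound {n k : ℕ} (hk1 : 1 ≤ k) (hlt : k < n) (x : Fin n → ℝ) (hx0 : ∀ i, 0 ≤ x i)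
    (hmono : ∀ i j : Fin n, i ≤ j → x j ≤ x i) (hz : x ⟨k, hlt⟩ = 0) :
    hsMean ((k:ℝ)/n) x
      ≤ ENNReal.ofReal (hsB ((k:ℝ)/n)
          * (∑ s ∈ (Finset.univ : Finset (Fin n)).powersetCard k, ∏ i ∈ s, x i) ^ ((k:ℝ)⁻¹)) := by
  classical
  have hK : (0:ℝ) < k := by exact_mod_cast hk1
  have hN : (0:ℝ) < n := by exact_mod_cast hk1.trans hlt.le
  have hKN : (k:ℝ) < n := by exact_mod_cast hlt
  have hc : (0:ℝ) < (k:ℝ)/n := div_pos hK hN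
  have hc1 : (k:ℝ)/n < 1 := (div_lt_one hN).mpr hKN
  have h1c : (0:ℝ) < 1 - (k:ℝ)/n := by linarith
  have hB : 0 < hsB ((k:ℝ)/n) := by
    rw [hsB, if_neg hc.ne', if_neg hc1.ne]
    exact mul_pos hc (Real.rpow_pos_of_pos h1c _)
  set φ : ℝ → ℝ := fun r => hsB ((k:ℝ)/n) * (hfun k x r) ^ ((k:ℝ)⁻¹) with hφdef
  have hφ0 : φ 0 = hsB ((k:ℝ)/n)
      * (∑ s ∈ (Finset.univ : Finset (Fin n)).powersetCard k, ∏ i ∈ s, x i) ^ ((k:ℝ)⁻¹) := by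
    rw [hφdef]; simp only; rw [hfun_zero x hk1]
  have hφ0nn : 0 ≤ φ 0 := by
    rw [hφ0]
    have hE0 : (0:ℝ) ≤ ∑ s ∈ (Finset.univ : Finset (Fin n)).powersetCard k, ∏ i ∈ s, x i :=
      Finset.sum_nonneg fun s _ => Finset.prod_nonneg fun i _ => hx0 i
    positivity
  have hcont : ContinuousAt φ 0 :=
    continuousAt_const.mul ((Real.continuousAt_rpow_const (hfun k x 0) ((k:ℝ)⁻¹)
      (Or.inr (by positivity))).comp (hfun_continuous x).continuousAt)
  rw [← hφ0]
  refine ENNReal.le_of_forall_pos_le_add fun ε hε _ => ?_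
  have hev : ∀ᶠ r in nhdsWithin (0:ℝ) (Set.Ioi 0), φ r < φ 0 + ε :=
    Filter.Tendsto.eventually_lt_const (by
      have : (0:ℝ) < ε := hε
      linarith) (hcont.tendsto.mono_left nhdsWithin_le_nhds)
  obtain ⟨r, hφr, hrmem⟩ := (hev.and self_mem_nhdsWithin).exists
  have hr : 0 < r := hrmem
  -- the witness y
  set y : ℝ := (k:ℝ)*r/((n:ℝ)-k) with hydef
  have hy : 0 < y := div_pos (mul_pos hK hr) (by linarith)
  have hr' : ((n:ℝ)-k)*y/k = r := by
    have hnk : ((n:ℝ)-k) ≠ 0 := by linarith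
    rw [hydef, ← mul_div_assoc, mul_comm (((n:ℝ))-(k:ℝ)) ((k:ℝ)*r), mul_div_assoc,
      div_self hnk, mul_one, mul_comm (k:ℝ) r, mul_div_assoc, div_self hK.ne', mul_one]
  have hxr : ∀ i, 0 < x i + r := fun i => by have := hx0 i; linarith
  have hPp : (0:ℝ) < ∏ i, (x i + r) := Finset.prod_pos fun i _ => hxr i
  have hfr : 0 < hfun k x r := by
    have h1 := hPp
    rw [prod_eq_hfun x hx0 hmono hlt hz r] at h1
    nlinarith [pow_pos hr (n - k)]
  have heexp : eexp (eIntegral (unifMeasure x) (fun t => hsKernel ((k:ℝ)/n) t y))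
      = ENNReal.ofReal (φ r) := by
    rw [eval_lt hk1 hlt x hx0 hy, hr']
    have hlogP : Real.log (∏ i, (x i + r))
        = ((n:ℝ)-k) * Real.log r + Real.log (hfun k x r) := by
      rw [prod_eq_hfun x hx0 hmono hlt hz r,
        Real.log_mul (pow_pos hr _).ne' hfr.ne', Real.log_pow, Nat.cast_sub hlt.le]
    have harith : Real.log (hsB ((k:ℝ)/n)) + (k:ℝ)⁻¹ *
        (Real.log (∏ i, (x i + r)) - ((n:ℝ)-(k:ℝ)) * Real.log r)
        = Real.log (hsB ((k:ℝ)/n)) + (k:ℝ)⁻¹ * Real.log (hfun k x r) := by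
      rw [hlogP]; ring
    rw [harith, eexp_coe, Real.exp_add, Real.exp_log hB, hφdef]
    simp only
    rw [Real.rpow_def_of_pos hfr, mul_comm (Real.log (hfun k x r))]
  calc hsMean ((k:ℝ)/n) x
      ≤ eexp (eIntegral (unifMeasure x) (fun t => hsKernel ((k:ℝ)/n) t y)) :=
        eexp_mono (iInf_le _ (⟨y, hy⟩ : {y : ℝ // 0 < y}))
    _ = ENNReal.ofReal (φ r) := heexp
    _ ≤ ENNReal.ofReal (φ 0 + ε) := ENNReal.ofReal_le_ofReal hφr.le
    _ ≤ ENNReal.ofReal (φ 0) + ENNReal.ofReal ε := ENNReal.ofReal_add_le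
    _ = ENNReal.ofReal (φ 0) + ε := by rw [ENNReal.ofReal_coe_nnreal]

lemma E1_pos {n k : ℕ} (hlt : k < n) (x : Fin n → ℝ) (hx0 : ∀ i, 0 ≤ x i)
    (hmono : ∀ i j : Fin n, i ≤ j → x j ≤ x i) (hzpos : 0 < x ⟨k, hlt⟩) :
    0 < ∑ s ∈ (Finset.univ : Finset (Fin n)).powersetCard (k+1), ∏ i ∈ s, x i := by
  classical
  set s₀ : Finset (Fin n) := Finset.univ.map (Fin.castLEEmb (by omega : k + 1 ≤ n)) with hs₀
  have hmem : s₀ ∈ (Finset.univ : Finset (Fin n)).powersetCard (k+1) := by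
    rw [Finset.mem_powersetCard]
    refine ⟨Finset.subset_univ _, ?_⟩
    rw [hs₀, Finset.card_map, Finset.card_univ, Fintype.card_fin]
  have hprod : 0 < ∏ i ∈ s₀, x i := by
    refine Finset.prod_pos fun i hi => ?_
    rw [hs₀, Finset.mem_map] at hi
    obtain ⟨j, _, rfl⟩ := hi
    have hle : (Fin.castLEEmb (by omega : k + 1 ≤ n)) j ≤ ⟨k, hlt⟩ := by
      simp only [Fin.le_def]
      have := j.isLt
      simp [Fin.castLEEmb]
      omega
    exact lt_of_lt_of_le hzpos (hmono _ _ hle)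
  refine lt_of_lt_of_le hprod (Finset.single_le_sum (f := fun s => ∏ i ∈ s, x i) (fun s _ => ?_) hmem)
  exact Finset.prod_nonneg fun i _ => hx0 i

theorem sym_le_hsm' {n k : ℕ} (hk1 : 1 ≤ k) (hkn : k ≤ n) (x : Fin n → ℝ)
    (hx0 : ∀ i, 0 ≤ x i) (hmono : ∀ i j : Fin n, i ≤ j → x j ≤ x i) :
    ENNReal.ofReal (symMean k x) ≤
        ENNReal.ofReal ((n.choose k : ℝ) ^ (-(k : ℝ)⁻¹) / hsB ((k : ℝ) / n)) *
          hsMean ((k : ℝ) / n) x ∧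
      (ENNReal.ofReal (symMean k x) =
          ENNReal.ofReal ((n.choose k : ℝ) ^ (-(k : ℝ)⁻¹) / hsB ((k : ℝ) / n)) *
            hsMean ((k : ℝ) / n) x ↔
        ((∃ h : k < n, x ⟨k, h⟩ = 0) ∨ k = n)) := by
  classical
  rcases eq_or_lt_of_le hkn with heq | hlt
  · subst heq
    have heqq := case_eq hk1 x hx0
    exact ⟨le_of_eq heqq, ⟨fun _ => Or.inr rfl, fun _ => heqq⟩⟩
  · -- k < n
    have hK : (0:ℝ) < k := by exact_mod_cast hk1
    have hN : (0:ℝ) < n := by exact_mod_cast hk1.trans hlt.le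
    have hKN : (k:ℝ) < n := by exact_mod_cast hlt
    have hc : (0:ℝ) < (k:ℝ)/n := div_pos hK hN
    have hc1 : (k:ℝ)/n < 1 := (div_lt_one hN).mpr hKN
    have h1c : (0:ℝ) < 1 - (k:ℝ)/n := by linarith
    have hB : 0 < hsB ((k:ℝ)/n) := by
      rw [hsB, if_neg hc.ne', if_neg hc1.ne]
      exact mul_pos hc (Real.rpow_pos_of_pos h1c _)
    have hp : (0:ℝ) < (k:ℝ)⁻¹ := by positivity
    set E : ℝ := ∑ s ∈ (Finset.univ : Finset (Fin n)).powersetCard k, ∏ i ∈ s, x i with hE_def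
    have hE0 : 0 ≤ E :=
      Finset.sum_nonneg fun s _ => Finset.prod_nonneg fun i _ => hx0 i
    set C : ℝ := (n.choose k : ℝ) with hC_def
    have hC : 0 < C := by rw [hC_def]; exact_mod_cast Nat.choose_pos hkn
    set Cst : ℝ := C ^ (-(k:ℝ)⁻¹) / hsB ((k:ℝ)/n) with hCst_def
    have hCst : 0 < Cst := div_pos (Real.rpow_pos_of_pos hC _) hB
    have hS : symMean k x = E ^ ((k:ℝ)⁻¹) * C ^ (-(k:ℝ)⁻¹) := by
      rw [symMean, Real.div_rpow hE0 hC.le, Real.rpow_neg hC.le, div_eq_mul_inv]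
    have hconst : ∀ E' : ℝ, 0 ≤ E' →
        Cst * (hsB ((k:ℝ)/n) * E' ^ ((k:ℝ)⁻¹)) = E' ^ ((k:ℝ)⁻¹) * C ^ (-(k:ℝ)⁻¹) := by
      intro E' _
      rw [hCst_def]
      field_simp
    by_cases hz : x ⟨k, hlt⟩ = 0
    · -- equality case
      have hupper : ENNReal.ofReal Cst * hsMean ((k:ℝ)/n) x ≤ ENNReal.ofReal (symMean k x) := by
        calc ENNReal.ofReal Cst * hsMean ((k:ℝ)/n) x
            ≤ ENNReal.ofReal Cst * ENNReal.ofReal (hsB ((k:ℝ)/n) * E ^ ((k:ℝ)⁻¹)) :=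
              mul_le_mul_right (upper_bound hk1 hlt x hx0 hmono hz) _
          _ = ENNReal.ofReal (Cst * (hsB ((k:ℝ)/n) * E ^ ((k:ℝ)⁻¹))) :=
              (ENNReal.ofReal_mul hCst.le).symm
          _ = ENNReal.ofReal (symMean k x) := by rw [hconst E hE0, hS]
      have hlower : ENNReal.ofReal (symMean k x) ≤ ENNReal.ofReal Cst * hsMean ((k:ℝ)/n) x := by
        rcases eq_or_lt_of_le hE0 with hE | hE
        · rw [hS, ← hE, Real.zero_rpow hp.ne', zero_mul, ENNReal.ofReal_zero]
          exact zero_le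
        · have hlb := lower_bound hk1 hlt x hx0 E hE
            (fun r hr => Ek_le_prod x hx0 hr.le k)
          calc ENNReal.ofReal (symMean k x)
              = ENNReal.ofReal (Cst * (hsB ((k:ℝ)/n) * E ^ ((k:ℝ)⁻¹))) := by
                rw [hconst E hE0, hS]
            _ = ENNReal.ofReal Cst * ENNReal.ofReal (hsB ((k:ℝ)/n) * E ^ ((k:ℝ)⁻¹)) :=
                ENNReal.ofReal_mul hCst.le
            _ ≤ ENNReal.ofReal Cst * hsMean ((k:ℝ)/n) x := mul_le_mul_right hlb _
      have heqq := le_antisymm hlower hupper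
      exact ⟨heqq.le, ⟨fun _ => Or.inl ⟨hlt, hz⟩, fun _ => heqq⟩⟩
    · -- strict case
      have hzpos : 0 < x ⟨k, hlt⟩ := (hx0 _).lt_of_ne (Ne.symm hz)
      set E1 : ℝ := ∑ s ∈ (Finset.univ : Finset (Fin n)).powersetCard (k+1), ∏ i ∈ s, x i
        with hE1_def
      have hE1 : 0 < E1 := E1_pos hlt x hx0 hmono hzpos
      set q : ℝ := min E1 1 with hq_def
      have hq : 0 < q := lt_min hE1 one_pos
      have key : ∀ r : ℝ, 0 < r → (E + q) * r ^ (n - k) ≤ ∏ i, (x i + r) := by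
        intro r hr
        rcases le_total r 1 with h1 | h1
        · have hA := Ek_Ek1_le_prod x hx0 hr.le k
          have hq1 : q * r ^ (n - k) ≤ E1 * r ^ (n - (k+1)) :=
            mul_le_mul (min_le_left _ _) (pow_le_pow_of_le_one hr.le h1 (by omega))
              (pow_nonneg hr.le _) hE1.le
          rw [add_mul]
          rw [← hE_def, ← hE1_def] at hA
          linarith
        · have hA := Ek_rn_le_prod x hx0 hr.le hk1
          have hq1 : q * r ^ (n - k) ≤ r ^ n := by
            calc q * r ^ (n - k) ≤ 1 * r ^ (n - k) :=
                  mul_le_mul_of_nonneg_right (min_le_right _ _) (pow_nonneg hr.le _)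
              _ = r ^ (n - k) := one_mul _
              _ ≤ r ^ n := pow_le_pow_right₀ h1 (by omega)
          rw [add_mul]
          rw [← hE_def] at hA
          linarith
      have hlb := lower_bound hk1 hlt x hx0 (E + q) (by linarith) key
      have hstrict : ENNReal.ofReal (symMean k x)
          < ENNReal.ofReal Cst * hsMean ((k:ℝ)/n) x := by
        have hT : 0 < (E + q) ^ ((k:ℝ)⁻¹) * C ^ (-(k:ℝ)⁻¹) :=
          mul_pos (Real.rpow_pos_of_pos (by linarith) _) (Real.rpow_pos_of_pos hC _)
        have hlt2 : symMean k x < (E + q) ^ ((k:ℝ)⁻¹) * C ^ (-(k:ℝ)⁻¹) := by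
          rw [hS]
          exact mul_lt_mul_of_pos_right
            (Real.rpow_lt_rpow hE0 (lt_add_of_pos_right _ hq) hp)
            (Real.rpow_pos_of_pos hC _)
        calc ENNReal.ofReal (symMean k x)
            < ENNReal.ofReal ((E + q) ^ ((k:ℝ)⁻¹) * C ^ (-(k:ℝ)⁻¹)) :=
              (ENNReal.ofReal_lt_ofReal_iff hT).mpr hlt2
          _ = ENNReal.ofReal (Cst * (hsB ((k:ℝ)/n) * (E + q) ^ ((k:ℝ)⁻¹))) := by
              rw [hconst (E + q) (by linarith)]
          _ = ENNReal.ofReal Cst * ENNReal.ofReal (hsB ((k:ℝ)/n) * (E + q) ^ ((k:ℝ)⁻¹)) :=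
              ENNReal.ofReal_mul hCst.le
          _ ≤ ENNReal.ofReal Cst * hsMean ((k:ℝ)/n) x := mul_le_mul_right hlb _
      refine ⟨hstrict.le, ⟨fun h => absurd h hstrict.ne, fun hdisj => ?_⟩⟩
      rcases hdisj with ⟨h, h0⟩ | h
      · exact absurd h0 hz
      · omega

/-- Theorem (main upper inequality, with equality cases).
If `x₁ ≥ ⋯ ≥ x_n ≥ 0` and `1 ≤ k ≤ n`, then
`sym_k(x) ≤ (C(n,k)^{-1/k} / B(k/n)) · hsm_{k/n}(x)`, with equality iff `x_{k+1} = 0` or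
`k = n`. -/
theorem sym_le_hsm {n k : ℕ} (hk1 : 1 ≤ k) (hkn : k ≤ n) (x : Fin n → ℝ)
    (hx0 : ∀ i, 0 ≤ x i) (hmono : ∀ i j : Fin n, i ≤ j → x j ≤ x i) :
    ENNReal.ofReal (symMean k x) ≤
        ENNReal.ofReal ((n.choose k : ℝ) ^ (-(k : ℝ)⁻¹) / hsB ((k : ℝ) / n)) *
          hsMean ((k : ℝ) / n) x ∧
      (ENNReal.ofReal (symMean k x) =
          ENNReal.ofReal ((n.choose k : ℝ) ^ (-(k : ℝ)⁻¹) / hsB ((k : ℝ) / n)) *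
            hsMean ((k : ℝ) / n) x ↔
        ((∃ h : k < n, x ⟨k, h⟩ = 0) ∨ k = n)) := by
  exact sym_le_hsm' hk1 hkn x hx0 hmono
end

section
/- For all integers n ≥ k ≥ 1, one has 1 ≤ C(n,k)^{−1/k} / B(k/n) < (9k)^{1/(2k)}, and the left inequality is an equality if and only if k = n. -/
open MeasureTheory Filter Topology
open scoped ENNReal

open Stirling Real in
theorem sqrtpi_le_stirlingSeq (m : ℕ) : Real.sqrt Real.pi ≤ stirlingSeq (m+1) := by
  refine le_of_tendsto Stirling.tendsto_stirlingSeq_sqrt_pi ?_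
  filter_upwards [Filter.eventually_ge_atTop (m+1)] with j hj
  have h1 : 1 ≤ j := le_trans (Nat.le_add_left 1 m) hj
  have := Stirling.stirlingSeq'_antitone (Nat.le_sub_one_of_lt (Nat.lt_of_lt_of_le (Nat.lt_succ_self m) hj) : m ≤ j - 1)
  simpa [Function.comp, Nat.succ_eq_add_one, Nat.sub_add_cancel h1] using this
open Stirling Real in
theorem stirlingSeq_le_e (m : ℕ) : stirlingSeq (m+1) ≤ Real.exp 1 / Real.sqrt 2 := by
  have := Stirling.stirlingSeq'_antitone (Nat.zero_le m)
  simpa [Function.comp, Stirling.stirlingSeq_one] using this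
open Stirling Real Nat

theorem factorial_eq (m : ℕ) (hm : 1 ≤ m) :
    (m ! : ℝ) = stirlingSeq m * (Real.sqrt (2*m) * ((m:ℝ)/Real.exp 1)^m) := by
  have h : (0:ℝ) < Real.sqrt (2*m) * ((m:ℝ)/Real.exp 1)^m := by
    have : (0:ℝ) < m := by exact_mod_cast hm
    positivity
  rw [stirlingSeq, div_mul_cancel₀ _ (ne_of_gt h)]

theorem factorial_lower (m : ℕ) (hm : 1 ≤ m) :
    Real.sqrt Real.pi * (Real.sqrt (2*m) * ((m:ℝ)/Real.exp 1)^m) ≤ (m ! : ℝ) := by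
  have h : (0:ℝ) < Real.sqrt (2*m) * ((m:ℝ)/Real.exp 1)^m := by
    have : (0:ℝ) < m := by exact_mod_cast hm
    positivity
  rw [factorial_eq m hm]
  obtain ⟨m, rfl⟩ := Nat.exists_eq_add_of_le hm
  exact mul_le_mul_of_nonneg_right (by simpa [add_comm] using sqrtpi_le_stirlingSeq m) h.le

theorem factorial_upper (m : ℕ) (hm : 1 ≤ m) :
    (m ! : ℝ) ≤ (Real.exp 1 / Real.sqrt 2) * (Real.sqrt (2*m) * ((m:ℝ)/Real.exp 1)^m) := by
  have h : (0:ℝ) < Real.sqrt (2*m) * ((m:ℝ)/Real.exp 1)^m := by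
    have : (0:ℝ) < m := by exact_mod_cast hm
    positivity
  rw [factorial_eq m hm]
  obtain ⟨m, rfl⟩ := Nat.exists_eq_add_of_le hm
  exact mul_le_mul_of_nonneg_right (by simpa [add_comm] using stirlingSeq_le_e m) h.le
open Nat

theorem nat_choose_ineq (n k : ℕ) (hkn : k ≤ n) :
    n.choose k * (k^k * (n-k)^(n-k)) + k^n * (if k < n then 1 else 0) ≤ n^n := by
  have hadd : k + (n - k) = n := Nat.add_sub_cancel' hkn
  have hpow : n^n = ∑ i ∈ Finset.range (n+1), k^i * (n-k)^(n-i) * n.choose i := by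
    have := add_pow k (n-k) n
    rwa [hadd] at this
  rw [hpow]
  by_cases h : k < n
  · simp only [h, if_pos, mul_one]
    have hsub : ({k, n} : Finset ℕ) ⊆ Finset.range (n+1) := by
      intro i hi; simp at hi; rcases hi with rfl | rfl <;> simp [Nat.lt_succ_iff, hkn]
    calc n.choose k * (k^k * (n-k)^(n-k)) + k^n
        = ∑ i ∈ ({k, n} : Finset ℕ), k^i * (n-k)^(n-i) * n.choose i := by
          rw [Finset.sum_pair (Nat.ne_of_lt h)]
          simp [Nat.sub_self]
          ring
      _ ≤ _ := Finset.sum_le_sum_of_subset hsub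
  · simp only [h, if_neg, mul_zero, add_zero, not_false_iff]
    have hsub : ({k} : Finset ℕ) ⊆ Finset.range (n+1) := by
      intro i hi; simp at hi; simp [hi, Nat.lt_succ_iff, hkn]
    calc n.choose k * (k^k * (n-k)^(n-k))
        = ∑ i ∈ ({k} : Finset ℕ), k^i * (n-k)^(n-i) * n.choose i := by
          have : n - k = 0 := by omega
          simp [this]; ring
      _ ≤ _ := Finset.sum_le_sum_of_subset hsub

theorem numeric_ineq : Real.exp 1 ^ 4 < 9 * Real.pi * 2 := by
  have h1 : Real.exp 1 < 2.7182818286 := Real.exp_one_lt_d9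
  have h2 : (3.141592 : ℝ) < Real.pi := Real.pi_gt_d6
  have h3 : Real.exp 1 ^ 4 < 2.7182818286 ^ 4 :=
    pow_lt_pow_left₀ h1 (Real.exp_pos 1).le (by norm_num)
  nlinarith
open Nat Real

theorem aux_sqrt2 (x : ℝ) (hx : 0 ≤ x) :
    Real.exp 1 / Real.sqrt 2 * Real.sqrt (2*x) = Real.exp 1 * Real.sqrt x := by
  rw [Real.sqrt_mul (by norm_num : (0:ℝ) ≤ 2)]
  have h2 : Real.sqrt 2 ≠ 0 := by positivity
  field_simp

theorem scalar_ineq (n k m : ℕ) (hk : 1 ≤ k) (hm : 1 ≤ m) (hn : n = k + m) :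
    Real.exp 1 * Real.sqrt k * (Real.exp 1 * Real.sqrt m)
      < 3 * Real.sqrt k * (Real.sqrt Real.pi * (Real.sqrt 2 * Real.sqrt n)) := by
  have hkpos : (0:ℝ) < Real.sqrt k := Real.sqrt_pos.2 (by exact_mod_cast hk)
  have key : Real.exp 1 ^ 2 * Real.sqrt m < 3 * (Real.sqrt Real.pi * (Real.sqrt 2 * Real.sqrt n)) := by
    have h1 : Real.exp 1 ^ 2 * Real.sqrt m = Real.sqrt (Real.exp 1 ^ 4 * m) := by
      rw [Real.sqrt_mul (by positivity), show Real.exp 1 ^ 4 = (Real.exp 1 ^ 2)^2 by ring,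
        Real.sqrt_sq (by positivity)]
    have h2 : 3 * (Real.sqrt Real.pi * (Real.sqrt 2 * Real.sqrt n)) = Real.sqrt (9 * Real.pi * 2 * n) := by
      rw [Real.sqrt_mul (by positivity), Real.sqrt_mul (by positivity),
        Real.sqrt_mul (by norm_num : (0:ℝ) ≤ 9), show Real.sqrt 9 = 3 by
          rw [show (9:ℝ) = 3^2 by norm_num, Real.sqrt_sq (by norm_num)]]
      ring
    rw [h1, h2]
    apply Real.sqrt_lt_sqrt (by positivity)
    have hmn : (m:ℝ) ≤ n := by exact_mod_cast (by omega : m ≤ n)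
    have hn1 : (1:ℝ) ≤ n := by exact_mod_cast (by omega : 1 ≤ n)
    have := numeric_ineq
    nlinarith [Real.exp_pos 1, pow_pos (Real.exp_pos 1) 4]
  calc Real.exp 1 * Real.sqrt k * (Real.exp 1 * Real.sqrt m)
      = Real.sqrt k * (Real.exp 1 ^ 2 * Real.sqrt m) := by ring
    _ < Real.sqrt k * (3 * (Real.sqrt Real.pi * (Real.sqrt 2 * Real.sqrt n))) :=
        (mul_lt_mul_iff_right₀ hkpos).2 key
    _ = _ := by ring

theorem stirling_strict (n k m : ℕ) (hk : 1 ≤ k) (hm : 1 ≤ m) (hn : n = k + m) :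
    (n:ℝ)^n < 3 * Real.sqrt k * (n.choose k : ℝ) * ((k:ℝ)^k * (m:ℝ)^m) := by
  have hn1 : 1 ≤ n := by omega
  have hknat : k ≤ n := by omega
  have e1 := Real.exp 1
  have hCf : (n.choose k : ℝ) * (k ! : ℝ) * (m ! : ℝ) = (n ! : ℝ) := by
    have := Nat.choose_mul_factorial_mul_factorial hknat
    have hmm : n - k = m := by omega
    rw [hmm] at this
    exact_mod_cast congrArg (Nat.cast : ℕ → ℝ) this
  have hkr : (0:ℝ) < k := by exact_mod_cast hk
  have hmr : (0:ℝ) < m := by exact_mod_cast hm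
  have hnr : (0:ℝ) < n := by exact_mod_cast hn1
  have hfk := factorial_upper k hk
  have hfm := factorial_upper m hm
  have hfn := factorial_lower n hn1
  -- identity
  have hid : ((n:ℝ)/Real.exp 1)^n * ((k:ℝ)^k * (m:ℝ)^m)
      = ((k:ℝ)/Real.exp 1)^k * ((m:ℝ)/Real.exp 1)^m * (n:ℝ)^n := by
    rw [div_pow, div_pow, div_pow]
    have hcast : (k:ℝ) + m = n := by push_cast [hn]; ring
    field_simp
    rw [hn]
    ring
  have hP : (0:ℝ) < ((k:ℝ)/Real.exp 1)^k * ((m:ℝ)/Real.exp 1)^m * (n:ℝ)^n := by positivity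
  -- core strict inequality
  have core : (n:ℝ)^n * ((Real.exp 1/Real.sqrt 2) * (Real.sqrt (2*k) * ((k:ℝ)/Real.exp 1)^k))
        * ((Real.exp 1/Real.sqrt 2) * (Real.sqrt (2*m) * ((m:ℝ)/Real.exp 1)^m))
      < 3 * Real.sqrt k * (Real.sqrt Real.pi * (Real.sqrt (2*n) * ((n:ℝ)/Real.exp 1)^n))
        * ((k:ℝ)^k * (m:ℝ)^m) := by
    have ek : Real.exp 1 / Real.sqrt 2 * Real.sqrt (2*(k:ℝ)) = Real.exp 1 * Real.sqrt k :=
      aux_sqrt2 k hkr.le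
    have em : Real.exp 1 / Real.sqrt 2 * Real.sqrt (2*(m:ℝ)) = Real.exp 1 * Real.sqrt m :=
      aux_sqrt2 m hmr.le
    have en : Real.sqrt (2*(n:ℝ)) = Real.sqrt 2 * Real.sqrt n :=
      Real.sqrt_mul (by norm_num) _
    calc (n:ℝ)^n * ((Real.exp 1/Real.sqrt 2) * (Real.sqrt (2*k) * ((k:ℝ)/Real.exp 1)^k))
        * ((Real.exp 1/Real.sqrt 2) * (Real.sqrt (2*m) * ((m:ℝ)/Real.exp 1)^m))
        = (Real.exp 1 / Real.sqrt 2 * Real.sqrt (2*(k:ℝ)) * (Real.exp 1 / Real.sqrt 2 * Real.sqrt (2*(m:ℝ))))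
          * (((k:ℝ)/Real.exp 1)^k * ((m:ℝ)/Real.exp 1)^m * (n:ℝ)^n) := by ring
      _ = (Real.exp 1 * Real.sqrt k * (Real.exp 1 * Real.sqrt m))
          * (((k:ℝ)/Real.exp 1)^k * ((m:ℝ)/Real.exp 1)^m * (n:ℝ)^n) := by rw [ek, em]
      _ < (3 * Real.sqrt k * (Real.sqrt Real.pi * (Real.sqrt 2 * Real.sqrt n)))
          * (((k:ℝ)/Real.exp 1)^k * ((m:ℝ)/Real.exp 1)^m * (n:ℝ)^n) :=
          (mul_lt_mul_iff_left₀ hP).2 (scalar_ineq n k m hk hm hn)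
      _ = (3 * Real.sqrt k * (Real.sqrt Real.pi * (Real.sqrt 2 * Real.sqrt n)))
          * (((n:ℝ)/Real.exp 1)^n * ((k:ℝ)^k * (m:ℝ)^m)) := by rw [hid]
      _ = 3 * Real.sqrt k * (Real.sqrt Real.pi * (Real.sqrt (2*n) * ((n:ℝ)/Real.exp 1)^n))
          * ((k:ℝ)^k * (m:ℝ)^m) := by rw [en]; ring
  -- assemble
  have hfkfm : (0:ℝ) < (k ! : ℝ) * (m ! : ℝ) := by positivity
  have chain : (n:ℝ)^n * ((k ! : ℝ) * (m ! : ℝ))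
      < (3 * Real.sqrt k * (n.choose k : ℝ) * ((k:ℝ)^k * (m:ℝ)^m)) * ((k ! : ℝ) * (m ! : ℝ)) := by
    have step1 : (n:ℝ)^n * ((k ! : ℝ) * (m ! : ℝ))
        ≤ (n:ℝ)^n * ((Real.exp 1/Real.sqrt 2) * (Real.sqrt (2*k) * ((k:ℝ)/Real.exp 1)^k))
          * ((Real.exp 1/Real.sqrt 2) * (Real.sqrt (2*m) * ((m:ℝ)/Real.exp 1)^m)) := by
      have h1 : (0:ℝ) ≤ (n:ℝ)^n := by positivity
      have h2 : (0:ℝ) ≤ (k ! : ℝ) := by positivity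
      have h3 : (0:ℝ) ≤ (m ! : ℝ) := by positivity
      calc (n:ℝ)^n * ((k ! : ℝ) * (m ! : ℝ)) = ((n:ℝ)^n * (k ! : ℝ)) * (m ! : ℝ) := by ring
        _ ≤ ((n:ℝ)^n * ((Real.exp 1/Real.sqrt 2) * (Real.sqrt (2*k) * ((k:ℝ)/Real.exp 1)^k))) * (m ! : ℝ) := by
            apply mul_le_mul_of_nonneg_right _ h3
            exact mul_le_mul_of_nonneg_left hfk h1
        _ ≤ _ := by
            apply mul_le_mul_of_nonneg_left hfm
            have hx : (0:ℝ) < (Real.exp 1/Real.sqrt 2) * (Real.sqrt (2*k) * ((k:ℝ)/Real.exp 1)^k) := by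
              positivity
            positivity
    have step3 : 3 * Real.sqrt k * (Real.sqrt Real.pi * (Real.sqrt (2*n) * ((n:ℝ)/Real.exp 1)^n))
          * ((k:ℝ)^k * (m:ℝ)^m)
        ≤ 3 * Real.sqrt k * (n ! : ℝ) * ((k:ℝ)^k * (m:ℝ)^m) := by
      apply mul_le_mul_of_nonneg_right _ (by positivity)
      apply mul_le_mul_of_nonneg_left hfn (by positivity)
    calc (n:ℝ)^n * ((k ! : ℝ) * (m ! : ℝ)) ≤ _ := step1
      _ < _ := core
      _ ≤ 3 * Real.sqrt k * (n ! : ℝ) * ((k:ℝ)^k * (m:ℝ)^m) := step3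
      _ = (3 * Real.sqrt k * (n.choose k : ℝ) * ((k:ℝ)^k * (m:ℝ)^m)) * ((k ! : ℝ) * (m ! : ℝ)) := by
          rw [← hCf]; ring
  exact lt_of_mul_lt_mul_right chain hfkfm.le

/-- For all integers `n ≥ k ≥ 1`,
`1 ≤ C(n,k)^{-1/k} / B(k/n) < (9k)^{1/(2k)}`, with equality on the left iff `k = n`. -/
theorem binom_hsB_bounds (n k : ℕ) (hk1 : 1 ≤ k) (hkn : k ≤ n) :
    1 ≤ (n.choose k : ℝ) ^ (-(k : ℝ)⁻¹) / hsB ((k : ℝ) / n) ∧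
    (n.choose k : ℝ) ^ (-(k : ℝ)⁻¹) / hsB ((k : ℝ) / n) < (9 * k : ℝ) ^ ((2 * k : ℝ))⁻¹ ∧
    ((1 : ℝ) = (n.choose k : ℝ) ^ (-(k : ℝ)⁻¹) / hsB ((k : ℝ) / n) ↔ k = n) := by
  have hkr : (0:ℝ) < k := by exact_mod_cast hk1
  have hnr : (0:ℝ) < n := by exact_mod_cast lt_of_lt_of_le hk1 hkn
  have hk1r : (1:ℝ) ≤ k := by exact_mod_cast hk1
  have hk9 : (1:ℝ) < 9 * k := by nlinarith
  have hkinv : (0:ℝ) < ((2 * k : ℝ))⁻¹ := by positivity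
  rcases hkn.eq_or_lt with rfl | hlt
  · -- k = n case
    have hc : (k:ℝ)/k = 1 := div_self hkr.ne'
    have hB1 : hsB ((k:ℝ)/k) = 1 := by rw [hc, hsB]; norm_num
    rw [hB1, Nat.choose_self]
    simp only [Nat.cast_one, Real.one_rpow, div_one]
    refine ⟨le_refl 1, ?_, by simp⟩
    exact (Real.one_lt_rpow_iff_of_pos (by linarith)).2 (Or.inl ⟨hk9, hkinv⟩)
  · -- k < n case
    set m := n - k with hmdef
    have hnkm : n = k + m := by omega
    have hm1 : 1 ≤ m := by omega
    have hmr : (0:ℝ) < m := by exact_mod_cast hm1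
    set c := (k:ℝ)/n with hcdef
    have hc0 : 0 < c := div_pos hkr hnr
    have hc1 : c < 1 := (div_lt_one hnr).2 (by exact_mod_cast hlt)
    have h1c : 1 - c = (m:ℝ)/n := by
      rw [hcdef]
      have : ((m:ℕ):ℝ) = (n:ℝ) - k := by push_cast [hnkm]; ring
      rw [this]; field_simp
    have h1cpos : 0 < 1 - c := by linarith
    have hB : hsB c = c * (1-c)^((1-c)/c) := by
      rw [hsB, if_neg hc0.ne', if_neg (ne_of_lt hc1)]
    have hBpos : 0 < hsB c := by
      rw [hB]; exact mul_pos hc0 (Real.rpow_pos_of_pos h1cpos _)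
    set C := (n.choose k : ℝ) with hCdef
    have hCpos : (0:ℝ) < C := by
      rw [hCdef]; exact_mod_cast Nat.choose_pos hkn
    set A := (k:ℝ)^k * (m:ℝ)^m with hAdef
    have hApos : 0 < A := by positivity
    have hNpos : (0:ℝ) < (n:ℝ)^n := by positivity
    -- B^k
    have hBk : hsB c ^ k = A / (n:ℝ)^n := by
      have hexp : (1-c)/c * k = (m:ℝ) := by
        rw [h1c, hcdef]; field_simp
      calc hsB c ^ k = (hsB c) ^ ((k:ℕ):ℝ) := (Real.rpow_natCast _ k).symm
        _ = c ^ ((k:ℕ):ℝ) * ((1-c)^((1-c)/c)) ^ ((k:ℕ):ℝ) := by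
            rw [hB, Real.mul_rpow hc0.le (Real.rpow_nonneg h1cpos.le _)]
        _ = c ^ ((k:ℕ):ℝ) * (1-c) ^ ((1-c)/c * k) := by
            rw [← Real.rpow_mul h1cpos.le]
        _ = c ^ ((k:ℕ):ℝ) * (1-c) ^ ((m:ℕ):ℝ) := by rw [hexp]
        _ = c ^ k * (1-c) ^ m := by rw [Real.rpow_natCast, Real.rpow_natCast]
        _ = A / (n:ℝ)^n := by
            rw [h1c, hcdef, hAdef, div_pow, div_pow, _root_.div_mul_div_comm, ← pow_add, ← hnkm]
    -- D^k
    set D := C ^ (-(k : ℝ)⁻¹) with hDdef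
    have hDpos : 0 < D := Real.rpow_pos_of_pos hCpos _
    have hDk : D ^ k = C⁻¹ := by
      rw [hDdef, ← Real.rpow_natCast (C ^ (-(k : ℝ)⁻¹)) k, ← Real.rpow_mul hCpos.le]
      rw [show -(k : ℝ)⁻¹ * ((k:ℕ):ℝ) = -1 by field_simp]
      rw [Real.rpow_neg_one]
    -- strict lower bound: C * A < n^n
    have hnat := nat_choose_ineq n k hkn
    rw [if_pos hlt, mul_one] at hnat
    have hk1n : 1 ≤ k^n := Nat.one_le_pow _ _ hk1
    rw [← hmdef] at hnat
    have hltN : n.choose k * (k^k * m^m) < n^n := by omega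
    have hltR : C * A < (n:ℝ)^n := by
      rw [hCdef, hAdef]
      exact_mod_cast hltN
    -- claim A : hsB c < D
    have claimA : hsB c < D := by
      have hpow : hsB c ^ k < D ^ k := by
        rw [hBk, hDk, inv_eq_one_div, div_lt_div_iff₀ hNpos hCpos]
        nlinarith
      exact lt_of_pow_lt_pow_left₀ k hDpos.le hpow
    -- claim B : D < hsB c * E
    set E := (9 * (k:ℝ)) ^ ((2 * (k:ℝ)))⁻¹ with hEdef
    have hEpos : 0 < E := Real.rpow_pos_of_pos (by linarith) _
    have hEk : E ^ k = Real.sqrt (9 * (k:ℝ)) := by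
      rw [hEdef, ← Real.rpow_natCast ((9*(k:ℝ)) ^ ((2 * (k:ℝ)))⁻¹) k,
        ← Real.rpow_mul (by linarith : (0:ℝ) ≤ 9*(k:ℝ))]
      rw [show ((2 * (k:ℝ)))⁻¹ * ((k:ℕ):ℝ) = 1/2 by field_simp]
      rw [← Real.sqrt_eq_rpow]
    have hsqrt9 : Real.sqrt (9 * (k:ℝ)) = 3 * Real.sqrt k := by
      rw [Real.sqrt_mul (by norm_num : (0:ℝ) ≤ 9),
        show Real.sqrt 9 = 3 by rw [show (9:ℝ) = 3^2 by norm_num, Real.sqrt_sq (by norm_num)]]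
    have hstir := stirling_strict n k m hk1 hm1 hnkm
    have claimB : D < hsB c * E := by
      have hpow : D ^ k < (hsB c * E) ^ k := by
        rw [mul_pow, hBk, hEk, hDk, hsqrt9, div_mul_eq_mul_div, inv_eq_one_div,
          div_lt_div_iff₀ hCpos hNpos, one_mul]
        nlinarith [hstir]
      exact lt_of_pow_lt_pow_left₀ k (by positivity) hpow
    have hR1 : 1 < D / hsB c := (one_lt_div hBpos).2 claimA
    refine ⟨le_of_lt hR1, ?_, ?_⟩
    · rw [div_lt_iff₀ hBpos]
      calc D < hsB c * E := claimB
        _ = E * hsB c := mul_comm _ _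
    · constructor
      · intro h; exfalso; rw [← h] at hR1; exact lt_irrefl 1 hR1
      · intro h; exact absurd h (Nat.ne_of_lt hlt)
end
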